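/- Let $\kappa > 1$, $p > 0$, $\bar{\beta} > 0$, $\bar{q} = (\bar{q}_1,\bar{q}_2) \in \mathbb{R}^2$ with $\bar{q}_1, \bar{q}_2 > 0$, and set $c_1 = -\frac{\bar{q}_1}{\kappa - 1}$, $c_2 = \frac{\kappa\, \bar{q}_2}{\kappa - 1}$. Fix $R > 0$ and consider the restriction $H_R(\theta) = R^p + \frac{\bar{\beta}}{2}\big( (\frac{R}{\sqrt{\kappa}}\cos\theta - \bar{q}_1)^2 + (R\sin\theta - \bar{q}_2)^2 \big)$ of the function $H(z) = (\kappa z_1^2 + z_2^2)^{p/2} + \frac{\bar{\beta}}{2}\|z - \bar{q}\|_2^2$ to the ellipse $\mathcal{E}_R = \{z : \kappa z_1^2 + z_2^2 = R^2\}$. Then every minimiser of $H_R$ over $[0, 2\pi)$ corresponds to a point of $\mathcal{E}_R \cap \mathcal{H}$, where $\mathcal{H} = \{z : (z_1 - c_1)(z_2 - c_2) = c_1 c_2\}$; moreover, the intersection point of $\mathcal{E}_R \cap \mathcal{H}$ lying in the first (open) quadrant is a global minimiser of $H_R$. -/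
import Mathlib


/-- Every minimiser over `[0, 2π)` of the restriction `H_R` of the proximal objective
to the ellipse `E_R` corresponds to a point of `E_R ∩ H`, where `H` is the hyperbola
`(z₁-c₁)(z₂-c₂) = c₁c₂`; moreover any point of `E_R ∩ H` lying in the open first
quadrant is a global minimiser of `H_R` over `[0, 2π)`. -/
theorem stmt7 (κ p β q1 q2 R : ℝ) (hκ : 1 < κ) (hp : 0 < p) (hβ : 0 < β)
    (hq1 : 0 < q1) (hq2 : 0 < q2) (hR : 0 < R) :
    let c1 : ℝ := -q1 / (κ - 1)
    let c2 : ℝ := κ * q2 / (κ - 1)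
    let z1 : ℝ → ℝ := fun θ => R / Real.sqrt κ * Real.cos θ
    let z2 : ℝ → ℝ := fun θ => R * Real.sin θ
    let HR : ℝ → ℝ := fun θ =>
      R ^ p + β / 2 * ((z1 θ - q1) ^ 2 + (z2 θ - q2) ^ 2)
    (∀ θstar ∈ Set.Ico 0 (2 * Real.pi),
        (∀ θ ∈ Set.Ico 0 (2 * Real.pi), HR θstar ≤ HR θ) →
        (z1 θstar - c1) * (z2 θstar - c2) = c1 * c2) ∧
    (∀ θ ∈ Set.Ico 0 (2 * Real.pi),
        (z1 θ - c1) * (z2 θ - c2) = c1 * c2 → 0 < z1 θ → 0 < z2 θ →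
        ∀ θ' ∈ Set.Ico 0 (2 * Real.pi), HR θ ≤ HR θ') := by
  intro c1 c2 z1 z2 HR
  have hκ0 : (0:ℝ) < κ := lt_trans one_pos hκ
  have hκ1 : (0:ℝ) < κ - 1 := by linarith
  set a : ℝ := R / Real.sqrt κ with ha_def
  have hsq : Real.sqrt κ > 0 := Real.sqrt_pos.mpr hκ0
  have ha : 0 < a := div_pos hR hsq
  have ha2 : κ * a ^ 2 = R ^ 2 := by
    rw [ha_def, div_pow, Real.sq_sqrt hκ0.le]
    field_simp
  have hz1a : ∀ t, z1 t = a * Real.cos t := fun t => by simp only [z1, ha_def]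
  have hHR : HR = fun t => R ^ p + β / 2 *
      ((a * Real.cos t - q1) ^ 2 + (R * Real.sin t - q2) ^ 2) := by
    funext t
    simp only [HR, z2, hz1a]
  clear_value a
  have hA : 0 < R ^ 2 - a ^ 2 := by nlinarith [mul_pos ha ha]
  constructor
  · intro θ hθ hmin
    have hper : Function.Periodic HR (2 * Real.pi) := by
      intro t
      simp only [HR, z1, z2, Real.cos_add_two_pi, Real.sin_add_two_pi]
    have hglobal : ∀ t : ℝ, HR θ ≤ HR t := by
      intro t
      have hmem := toIcoMod_mem_Ico Real.two_pi_pos 0 t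
      rw [zero_add] at hmem
      have h1 := hmin _ hmem
      have h2 : HR (toIcoMod Real.two_pi_pos 0 t) = HR t := by
        rw [toIcoMod]
        exact hper.sub_zsmul_eq _
      rwa [h2] at h1
    have hloc : IsLocalMin HR θ := Filter.Eventually.of_forall hglobal
    have hderiv : HasDerivAt HR
        (β / 2 * (2 * (a * Real.cos θ - q1) * (a * (-Real.sin θ)) +
          2 * (R * Real.sin θ - q2) * (R * Real.cos θ))) θ := by
      rw [hHR]
      have h1 : HasDerivAt (fun t : ℝ => a * Real.cos t - q1) (a * (-Real.sin θ)) θ :=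
        ((Real.hasDerivAt_cos θ).const_mul a).sub_const q1
      have h2 : HasDerivAt (fun t : ℝ => R * Real.sin t - q2) (R * Real.cos θ) θ :=
        ((Real.hasDerivAt_sin θ).const_mul R).sub_const q2
      exact (((h1.pow 2).add (h2.pow 2)).const_mul (β/2)).const_add _ |>.congr_deriv (by ring)
    have hzero := hloc.hasDerivAt_eq_zero hderiv
    have hβ2 : β / 2 ≠ 0 := by positivity
    have hE : (R ^ 2 - a ^ 2) * Real.sin θ * Real.cos θ + a * q1 * Real.sin θ
        - R * q2 * Real.cos θ = 0 := by
      rcases mul_eq_zero.mp hzero with h | h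
      · exact absurd h hβ2
      · nlinarith [h]
    have hGR : R * (a * R * Real.sin θ * Real.cos θ * (κ - 1) - κ * q2 * (a * Real.cos θ)
        + q1 * (R * Real.sin θ)) = 0 := by
      linear_combination (a * κ) * hE + (a * Real.sin θ * Real.cos θ - q1 * Real.sin θ) * ha2
    have hG : a * R * Real.sin θ * Real.cos θ * (κ - 1) - κ * q2 * (a * Real.cos θ)
        + q1 * (R * Real.sin θ) = 0 := by
      rcases mul_eq_zero.mp hGR with h | h
      · exact absurd h hR.ne'
      · exact h
    show (z1 θ - c1) * (z2 θ - c2) = c1 * c2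
    rw [hz1a]
    have hexp : (a * Real.cos θ - c1) * (z2 θ - c2) - c1 * c2 =
        (a * R * Real.sin θ * Real.cos θ * (κ - 1) - κ * q2 * (a * Real.cos θ)
          + q1 * (R * Real.sin θ)) / (κ - 1) := by
      simp only [c1, c2, z2]
      field_simp
      ring
    have : (a * Real.cos θ - c1) * (z2 θ - c2) - c1 * c2 = 0 := by
      rw [hexp, hG, zero_div]
    linarith
  · intro θ hθ hhyp hz1 hz2 θ' hθ'
    set c := Real.cos θ
    set s := Real.sin θ
    set x := Real.cos θ'
    set y := Real.sin θ'
    have hz1' : 0 < a * c := by rw [← hz1a]; exact hz1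
    have hc : 0 < c := by
      by_contra h
      push_neg at h
      have : a * c ≤ 0 := mul_nonpos_of_nonneg_of_nonpos ha.le h
      exact absurd hz1' (not_lt.mpr this)
    have hcs : c ^ 2 + s ^ 2 = 1 := by
      have := Real.sin_sq_add_cos_sq θ; linarith
    have hxy : x ^ 2 + y ^ 2 = 1 := by
      have := Real.sin_sq_add_cos_sq θ'; linarith
    have hhyp' : (a * c - c1) * (R * s - c2) = c1 * c2 := by
      rw [← hz1a]; exact hhyp
    have hE : (R ^ 2 - a ^ 2) * s * c + a * q1 * s - R * q2 * c = 0 := by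
      simp only [c1, c2] at hhyp'
      field_simp at hhyp'
      have haκ : a * κ * (κ - 1) ≠ 0 := by positivity
      have key : a * κ * (κ - 1) * ((R ^ 2 - a ^ 2) * s * c + a * q1 * s - R * q2 * c) = 0 := by
        linear_combination R * hhyp' - ((κ - 1) * (a * s * c - q1 * s)) * ha2
      exact (mul_eq_zero.mp key).resolve_left haκ
    rw [hHR]
    have hkey : c * (((a * x - q1) ^ 2 + (R * y - q2) ^ 2)
        - ((a * c - q1) ^ 2 + (R * s - q2) ^ 2))
        = a * q1 * (x - c) ^ 2 + (c * (R ^ 2 - a ^ 2) + a * q1) * (y - s) ^ 2 := by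
      linear_combination (2 * (y - s)) * hE + (c * a ^ 2 - a * q1) * hxy
        - (c * a ^ 2 - a * q1) * hcs
    have h1 : 0 ≤ a * q1 * (x - c) ^ 2 + (c * (R ^ 2 - a ^ 2) + a * q1) * (y - s) ^ 2 := by
      have h3 := mul_pos ha hq1
      have h4 := mul_pos hc hA
      positivity
    have h2 : 0 ≤ ((a * x - q1) ^ 2 + (R * y - q2) ^ 2)
        - ((a * c - q1) ^ 2 + (R * s - q2) ^ 2) :=
      (mul_nonneg_iff_of_pos_left hc).mp (by rw [hkey]; exact h1)
    have hβ2' : (0:ℝ) ≤ β / 2 := by positivity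
    have h5 := mul_nonneg hβ2' h2
    show R ^ p + β / 2 * ((a * c - q1) ^ 2 + (R * s - q2) ^ 2)
        ≤ R ^ p + β / 2 * ((a * x - q1) ^ 2 + (R * y - q2) ^ 2)
    linarith [h5]
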